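/- Generative degenerate-support theorem: let P be the clean joint distribution on ℝ^p × ℝ^q and suppose there exist a unit vector u ∈ ℝ^p and a ∈ ℝ such that the first marginal P_X gives probability one to the hyperplane { x : uᵀx = a }. Fix s > 0 and the trigger η = s·u, and let Q be any backdoor joint distribution on ℝ^p × ℝ^q whose first marginal Q_X is the pushforward of P_X under x ↦ x + η. Let ρ ∈ (0,1), M = (1−ρ)P + ρQ, and let p₀ be a probability measure on ℝ^q such that P, Q, M admit conditional density kernels f^cl, f^bd, f^poi : ℝ^p × ℝ^q → [0,1] with respect to p₀: P(dx,dy) = f^cl(x,y) p₀(dy) P_X(dx), Q(dx,dy) = f^bd(x,y) p₀(dy) Q_X(dx), M(dx,dy) = f^poi(x,y) p₀(dy) M_X(dx). Then for every loss ℓ : [0,1]² → [0,∞) and every measurable f̂ : ℝ^p × ℝ^q → [0,1]: ∫∫ ℓ(f̂(x,y), f^cl(x,y)) p₀(dy) P_X(dx) ≤ (1−ρ)^{-1} ∫∫ ℓ(f̂(x,y), f^poi(x,y)) p₀(dy) M_X(dx), and ∫∫ ℓ(f̂(x,y), f^bd(x,y)) p₀(dy) Q_X(dx) ≤ ρ^{-1}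 ∫∫ ℓ(f̂(x,y), f^poi(x,y)) p₀(dy) M_X(dx). Hence a backdoor attack on a generative model with trigger along a degenerate direction of arbitrarily small magnitude is successful. -/

import Mathlib

open MeasureTheory
open scoped RealInnerProductSpace ENNReal

section Aux


variable {X Y : Type*} [MeasurableSpace X] [MeasurableSpace Y]

lemma fst_smul_aux {X Y : Type*} [MeasurableSpace X] [MeasurableSpace Y]
    (e : ℝ≥0∞) (μ : Measure (X × Y)) : (e • μ).fst = e • μ.fst := by
  simp [Measure.fst, Measure.map_smul]

lemma enn_cancel {c a b : ℝ≥0∞} (hc0 : c ≠ 0) (hct : c ≠ ⊤) (h : c * a = c * b) : a = b := by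
  have h2 := congrArg (fun t => c⁻¹ * t) h
  simpa [← mul_assoc, ENNReal.inv_mul_cancel hc0 hct, one_mul] using h2

lemma sec_int (μ : Measure X) (ν : Measure Y) [SigmaFinite ν]
    (h : X × Y → ℝ≥0∞) (hh : Measurable h) (A : Set (X × Y)) (hA : MeasurableSet A) :
    ∫⁻ x, ∫⁻ y in {y | (x, y) ∈ A}, h (x, y) ∂ν ∂μ = ∫⁻ z in A, h z ∂(μ.prod ν) := by
  rw [← lintegral_indicator hA, lintegral_prod _ (hh.indicator hA).aemeasurable]
  refine lintegral_congr fun x => ?_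
  have hsec : {y | (x, y) ∈ A} = Prod.mk x ⁻¹' A := rfl
  rw [hsec, ← lintegral_indicator (measurable_prodMk_left hA)]
  refine lintegral_congr fun y => ?_
  by_cases hxy : (x, y) ∈ A <;> simp [Set.indicator_apply, hxy, Set.mem_setOf_eq]

lemma kernel_unique (P Q M : Measure (X × Y)) [IsProbabilityMeasure P] [IsProbabilityMeasure Q]
    (p₀ : Measure Y) [IsProbabilityMeasure p₀]
    (c d : ℝ≥0∞) (hc0 : c ≠ 0) (hct : c ≠ ⊤)
    (hM : M = c • P + d • Q)
    (H : Set X) (hHm : MeasurableSet H) (hPHc : P.fst Hᶜ = 0) (hQH : Q.fst H = 0)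
    (f g : X → Y → ℝ)
    (hf : Measurable (Function.uncurry f)) (hg : Measurable (Function.uncurry g))
    (hPker : ∀ A, MeasurableSet A →
      P A = ∫⁻ x, ∫⁻ y in {y | (x, y) ∈ A}, ENNReal.ofReal (f x y) ∂p₀ ∂P.fst)
    (hMker : ∀ A, MeasurableSet A →
      M A = ∫⁻ x, ∫⁻ y in {y | (x, y) ∈ A}, ENNReal.ofReal (g x y) ∂p₀ ∂M.fst) :
    (fun z : X × Y => ENNReal.ofReal (f z.1 z.2)) =ᵐ[P.fst.prod p₀]
      (fun z => ENNReal.ofReal (g z.1 z.2)) := by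
  have hfm : Measurable fun z : X × Y => ENNReal.ofReal (f z.1 z.2) :=
    ENNReal.measurable_ofReal.comp hf
  have hgm : Measurable fun z : X × Y => ENNReal.ofReal (g z.1 z.2) :=
    ENNReal.measurable_ofReal.comp hg
  have hMfst : M.fst = c • P.fst + d • Q.fst := by
    rw [hM, Measure.fst_add, fst_smul_aux, fst_smul_aux]
  refine ae_eq_of_forall_setLIntegral_eq_of_sigmaFinite hfm hgm fun A hA _ => ?_
  rw [← sec_int _ _ _ hfm A hA, ← sec_int _ _ _ hgm A hA]
  set T : Set (X × Y) := H ×ˢ (Set.univ : Set Y) with hT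
  have hTm : MeasurableSet T := hHm.prod MeasurableSet.univ
  set A' := A ∩ T with hA'def
  have hA' : MeasurableSet A' := hA.inter hTm
  -- P A = P A'
  have hPTc : P (A \ T) = 0 := by
    refine measure_mono_null (fun z hz => ?_) (?_ : P (Hᶜ ×ˢ (Set.univ : Set Y)) = 0)
    · exact ⟨fun h1 => hz.2 ⟨h1, Set.mem_univ _⟩, Set.mem_univ _⟩
    · rw [Set.prod_univ, ← Measure.fst_apply hHm.compl, hPHc]
  have hPA : P A = P A' := by
    rw [← measure_inter_add_diff A hTm, ← hA'def, hPTc, add_zero]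
  -- Q A' = 0
  have hQT : Q T = 0 := by rw [hT, Set.prod_univ, ← Measure.fst_apply hHm, hQH]
  have hQA' : Q A' = 0 := measure_mono_null Set.inter_subset_right hQT
  -- the M-kernel identity on A'
  have hMA' := hMker A' hA'
  rw [hMfst, hM] at hMA'
  simp only [Measure.add_apply, Measure.smul_apply, smul_eq_mul, lintegral_add_measure,
    lintegral_smul_measure, hQA', mul_zero, add_zero] at hMA'
  -- the Q.fst-integral of the A'-section vanishes
  have hQint : ∫⁻ x, ∫⁻ y in {y | (x, y) ∈ A'}, ENNReal.ofReal (g x y) ∂p₀ ∂Q.fst = 0 := by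
    have hle : ∀ x, (∫⁻ y in {y | (x, y) ∈ A'}, ENNReal.ofReal (g x y) ∂p₀) ≤
        H.indicator (fun _ => (⊤ : ℝ≥0∞)) x := by
      intro x
      by_cases hx : x ∈ H
      · simp [Set.indicator_apply, hx]
      · have : {y | (x, y) ∈ A'} = (∅ : Set Y) := by
          ext y; simp only [Set.mem_setOf_eq, Set.mem_empty_iff_false, iff_false]
          intro hmem; exact hx hmem.2.1
        simp [this, Set.indicator_apply, hx]
    refine le_antisymm ?_ zero_le
    calc ∫⁻ x, ∫⁻ y in {y | (x, y) ∈ A'}, ENNReal.ofReal (g x y) ∂p₀ ∂Q.fst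
        ≤ ∫⁻ x, H.indicator (fun _ => (⊤ : ℝ≥0∞)) x ∂Q.fst := lintegral_mono hle
      _ = 0 := by rw [lintegral_indicator hHm]; simp [hQH]
  rw [hQint, mul_zero, add_zero] at hMA'
  have hPA' : P A' = ∫⁻ x, ∫⁻ y in {y | (x, y) ∈ A'}, ENNReal.ofReal (g x y) ∂p₀ ∂P.fst :=
    enn_cancel hc0 hct hMA'
  -- almost every x lies in H
  have haeH : ∀ᵐ x ∂P.fst, x ∈ H := by
    rw [MeasureTheory.ae_iff]
    exact hPHc
  have hsec : ∫⁻ x, ∫⁻ y in {y | (x, y) ∈ A'}, ENNReal.ofReal (g x y) ∂p₀ ∂P.fst =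
      ∫⁻ x, ∫⁻ y in {y | (x, y) ∈ A}, ENNReal.ofReal (g x y) ∂p₀ ∂P.fst := by
    refine lintegral_congr_ae ?_
    filter_upwards [haeH] with x hx
    have : {y | (x, y) ∈ A'} = {y | (x, y) ∈ A} := by
      ext y
      simp only [hA'def, Set.mem_setOf_eq, Set.mem_inter_iff]
      exact ⟨fun h => h.1, fun h => ⟨h, hx, Set.mem_univ _⟩⟩
    rw [this]
  have key : (∫⁻ x, ∫⁻ y in {y | (x, y) ∈ A}, ENNReal.ofReal (f x y) ∂p₀ ∂P.fst) =
      ∫⁻ x, ∫⁻ y in {y | (x, y) ∈ A}, ENNReal.ofReal (g x y) ∂p₀ ∂P.fst := by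
    rw [← hPker A hA, hPA, hPA', hsec]
  exact key

end Aux

/-- Theorem 5, generative model with degenerate support: if the
clean input marginal `P_X` is supported on a hyperplane `{x : uᵀx = a}`, the
trigger is `η = s • u` with `s > 0`, the backdoor joint law `Q` has first marginal
`Q_X = P_X ∘ (· + η)⁻¹`, and `P, Q, M = (1-ρ)P + ρQ` admit conditional density
kernels `f^cl, f^bd, f^poi` with respect to a measure `p₀` on the output space,
then for every loss `ℓ : [0,1]² → [0,∞)` and every measurable
`f̂ : ℝ^p × ℝ^q → [0,1]`,
`∫∫ ℓ(f̂, f^cl) dp₀ dP_X ≤ (1-ρ)⁻¹ ∫∫ ℓ(f̂, f^poi) dp₀ dM_X` and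
`∫∫ ℓ(f̂, f^bd) dp₀ dQ_X ≤ ρ⁻¹ ∫∫ ℓ(f̂, f^poi) dp₀ dM_X`;
hence the generative backdoor attack with a trigger of arbitrarily small magnitude
along a degenerate direction is successful. -/
theorem generative_degenerate_attack {p q : ℕ} (hp : 1 ≤ p) (hq : 1 ≤ q)
    (P Q M : Measure (EuclideanSpace ℝ (Fin p) × EuclideanSpace ℝ (Fin q)))
    [IsProbabilityMeasure P] [IsProbabilityMeasure Q]
    (p₀ : Measure (EuclideanSpace ℝ (Fin q))) [IsProbabilityMeasure p₀]
    (ρ : ℝ) (hρ : ρ ∈ Set.Ioo (0:ℝ) 1)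
    (u : EuclideanSpace ℝ (Fin p)) (hu : ‖u‖ = 1) (a : ℝ)
    (hsupp : P.fst {x | ⟪u, x⟫ = a} = 1)
    (s : ℝ) (hs : 0 < s)
    (hQfst : Q.fst = P.fst.map (fun x => x + s • u))
    (hM : M = ENNReal.ofReal (1 - ρ) • P + ENNReal.ofReal ρ • Q)
    (fcl fbd fpoi : EuclideanSpace ℝ (Fin p) → EuclideanSpace ℝ (Fin q) → ℝ)
    (hfclmeas : Measurable (Function.uncurry fcl))
    (hfcl01 : ∀ x y, fcl x y ∈ Set.Icc (0:ℝ) 1)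
    (hfbdmeas : Measurable (Function.uncurry fbd))
    (hfbd01 : ∀ x y, fbd x y ∈ Set.Icc (0:ℝ) 1)
    (hfpoimeas : Measurable (Function.uncurry fpoi))
    (hfpoi01 : ∀ x y, fpoi x y ∈ Set.Icc (0:ℝ) 1)
    (hPker : ∀ A : Set (EuclideanSpace ℝ (Fin p) × EuclideanSpace ℝ (Fin q)),
      MeasurableSet A →
        P A = ∫⁻ x, ∫⁻ y in {y | (x, y) ∈ A}, ENNReal.ofReal (fcl x y) ∂p₀ ∂P.fst)
    (hQker : ∀ A : Set (EuclideanSpace ℝ (Fin p) × EuclideanSpace ℝ (Fin q)),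
      MeasurableSet A →
        Q A = ∫⁻ x, ∫⁻ y in {y | (x, y) ∈ A}, ENNReal.ofReal (fbd x y) ∂p₀ ∂Q.fst)
    (hMker : ∀ A : Set (EuclideanSpace ℝ (Fin p) × EuclideanSpace ℝ (Fin q)),
      MeasurableSet A →
        M A = ∫⁻ x, ∫⁻ y in {y | (x, y) ∈ A}, ENNReal.ofReal (fpoi x y) ∂p₀ ∂M.fst)
    (ℓ : ℝ → ℝ → ℝ)
    (hℓnn : ∀ x ∈ Set.Icc (0:ℝ) 1, ∀ y ∈ Set.Icc (0:ℝ) 1, 0 ≤ ℓ x y)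
    (fhat : EuclideanSpace ℝ (Fin p) → EuclideanSpace ℝ (Fin q) → ℝ)
    (hfhatmeas : Measurable (Function.uncurry fhat))
    (hfhat01 : ∀ x y, fhat x y ∈ Set.Icc (0:ℝ) 1) :
    (∫⁻ x, ∫⁻ y, ENNReal.ofReal (ℓ (fhat x y) (fcl x y)) ∂p₀ ∂P.fst) ≤
        (ENNReal.ofReal (1 - ρ))⁻¹ *
          ∫⁻ x, ∫⁻ y, ENNReal.ofReal (ℓ (fhat x y) (fpoi x y)) ∂p₀ ∂M.fst ∧
      (∫⁻ x, ∫⁻ y, ENNReal.ofReal (ℓ (fhat x y) (fbd x y)) ∂p₀ ∂Q.fst) ≤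
        (ENNReal.ofReal ρ)⁻¹ *
          ∫⁻ x, ∫⁻ y, ENNReal.ofReal (ℓ (fhat x y) (fpoi x y)) ∂p₀ ∂M.fst := by
  obtain ⟨hρ0, hρ1⟩ := hρ
  have hc0 : ENNReal.ofReal (1 - ρ) ≠ 0 := (ENNReal.ofReal_pos.mpr (by linarith)).ne'
  have hct : ENNReal.ofReal (1 - ρ) ≠ ⊤ := ENNReal.ofReal_ne_top
  have hd0 : ENNReal.ofReal ρ ≠ 0 := (ENNReal.ofReal_pos.mpr hρ0).ne'
  have hdt : ENNReal.ofReal ρ ≠ ⊤ := ENNReal.ofReal_ne_top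
  have hinner : Measurable fun x : EuclideanSpace ℝ (Fin p) => ⟪u, x⟫ :=
    (innerSL ℝ u).continuous.measurable
  have hHm : MeasurableSet {x : EuclideanSpace ℝ (Fin p) | ⟪u, x⟫ = a} :=
    hinner (measurableSet_singleton a)
  have hH'm : MeasurableSet {x : EuclideanSpace ℝ (Fin p) | ⟪u, x⟫ = a + s} :=
    hinner (measurableSet_singleton (a + s))
  have hPHc : P.fst {x : EuclideanSpace ℝ (Fin p) | ⟪u, x⟫ = a}ᶜ = 0 := by
    rw [measure_compl hHm (measure_ne_top _ _), measure_univ, hsupp, tsub_self]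
  have hT : Measurable fun x : EuclideanSpace ℝ (Fin p) => x + s • u :=
    (continuous_id.add continuous_const).measurable
  have hshift : ∀ x : EuclideanSpace ℝ (Fin p), ⟪u, x + s • u⟫ = ⟪u, x⟫ + s := by
    intro x
    rw [inner_add_right, real_inner_smul_right, real_inner_self_eq_norm_sq, hu]
    ring
  have hQH : Q.fst {x : EuclideanSpace ℝ (Fin p) | ⟪u, x⟫ = a} = 0 := by
    rw [hQfst, Measure.map_apply hT hHm]
    refine measure_mono_null (fun x hx => ?_) hPHc
    have hx' : ⟪u, x⟫ + s = a := by
      have := hx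
      simp only [Set.mem_preimage, Set.mem_setOf_eq, hshift x] at this
      exact this
    intro hmem
    have : ⟪u, x⟫ = a := hmem
    linarith
  have hQH' : Q.fst {x : EuclideanSpace ℝ (Fin p) | ⟪u, x⟫ = a + s} = 1 := by
    rw [hQfst, Measure.map_apply hT hH'm]
    have hpre : (fun x : EuclideanSpace ℝ (Fin p) => x + s • u) ⁻¹'
        {x | ⟪u, x⟫ = a + s} = {x | ⟪u, x⟫ = a} := by
      ext x
      simp only [Set.mem_preimage, Set.mem_setOf_eq, hshift x]
      constructor <;> intro h <;> linarith
    rw [hpre, hsupp]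
  have hQH'c : Q.fst {x : EuclideanSpace ℝ (Fin p) | ⟪u, x⟫ = a + s}ᶜ = 0 := by
    rw [measure_compl hH'm (measure_ne_top _ _), measure_univ, hQH', tsub_self]
  have hPH' : P.fst {x : EuclideanSpace ℝ (Fin p) | ⟪u, x⟫ = a + s} = 0 := by
    refine measure_mono_null (fun x hx => ?_) hPHc
    intro hmem
    have h1 : ⟪u, x⟫ = a + s := hx
    have h2 : ⟪u, x⟫ = a := hmem
    linarith
  have hM2 : M = ENNReal.ofReal ρ • Q + ENNReal.ofReal (1 - ρ) • P := by
    rw [hM, add_comm]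
  have h1 := kernel_unique P Q M p₀ _ _ hc0 hct hM _ hHm hPHc hQH fcl fpoi
    hfclmeas hfpoimeas hPker hMker
  have h2 := kernel_unique Q P M p₀ _ _ hd0 hdt hM2 _ hH'm hQH'c hPH' fbd fpoi
    hfbdmeas hfpoimeas hQker hMker
  have h1' : ∀ᵐ x ∂P.fst, ∀ᵐ y ∂p₀, fcl x y = fpoi x y := by
    filter_upwards [Measure.ae_ae_of_ae_prod h1] with x hx
    filter_upwards [hx] with y hy
    exact (ENNReal.ofReal_eq_ofReal_iff (hfcl01 x y).1 (hfpoi01 x y).1).mp hy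
  have h2' : ∀ᵐ x ∂Q.fst, ∀ᵐ y ∂p₀, fbd x y = fpoi x y := by
    filter_upwards [Measure.ae_ae_of_ae_prod h2] with x hx
    filter_upwards [hx] with y hy
    exact (ENNReal.ofReal_eq_ofReal_iff (hfbd01 x y).1 (hfpoi01 x y).1).mp hy
  have hIP : (∫⁻ x, ∫⁻ y, ENNReal.ofReal (ℓ (fhat x y) (fcl x y)) ∂p₀ ∂P.fst) =
      ∫⁻ x, ∫⁻ y, ENNReal.ofReal (ℓ (fhat x y) (fpoi x y)) ∂p₀ ∂P.fst := by
    refine lintegral_congr_ae ?_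
    filter_upwards [h1'] with x hx
    refine lintegral_congr_ae ?_
    filter_upwards [hx] with y hy
    rw [hy]
  have hIQ : (∫⁻ x, ∫⁻ y, ENNReal.ofReal (ℓ (fhat x y) (fbd x y)) ∂p₀ ∂Q.fst) =
      ∫⁻ x, ∫⁻ y, ENNReal.ofReal (ℓ (fhat x y) (fpoi x y)) ∂p₀ ∂Q.fst := by
    refine lintegral_congr_ae ?_
    filter_upwards [h2'] with x hx
    refine lintegral_congr_ae ?_
    filter_upwards [hx] with y hy
    rw [hy]
  have hMfst : M.fst = ENNReal.ofReal (1 - ρ) • P.fst + ENNReal.ofReal ρ • Q.fst := by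
    rw [hM, Measure.fst_add, fst_smul_aux, fst_smul_aux]
  have hIM : (∫⁻ x, ∫⁻ y, ENNReal.ofReal (ℓ (fhat x y) (fpoi x y)) ∂p₀ ∂M.fst) =
      ENNReal.ofReal (1 - ρ) *
        (∫⁻ x, ∫⁻ y, ENNReal.ofReal (ℓ (fhat x y) (fpoi x y)) ∂p₀ ∂P.fst) +
      ENNReal.ofReal ρ *
        (∫⁻ x, ∫⁻ y, ENNReal.ofReal (ℓ (fhat x y) (fpoi x y)) ∂p₀ ∂Q.fst) := by
    rw [hMfst, lintegral_add_measure, lintegral_smul_measure, lintegral_smul_measure, smul_eq_mul, smul_eq_mul]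
  constructor
  · calc (∫⁻ x, ∫⁻ y, ENNReal.ofReal (ℓ (fhat x y) (fcl x y)) ∂p₀ ∂P.fst)
        = ∫⁻ x, ∫⁻ y, ENNReal.ofReal (ℓ (fhat x y) (fpoi x y)) ∂p₀ ∂P.fst := hIP
      _ = (ENNReal.ofReal (1 - ρ))⁻¹ * (ENNReal.ofReal (1 - ρ) *
          ∫⁻ x, ∫⁻ y, ENNReal.ofReal (ℓ (fhat x y) (fpoi x y)) ∂p₀ ∂P.fst) := by
          rw [← mul_assoc, ENNReal.inv_mul_cancel hc0 hct, one_mul]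
      _ ≤ (ENNReal.ofReal (1 - ρ))⁻¹ *
          ∫⁻ x, ∫⁻ y, ENNReal.ofReal (ℓ (fhat x y) (fpoi x y)) ∂p₀ ∂M.fst := by
          rw [hIM]; exact mul_le_mul_right le_self_add _
  · calc (∫⁻ x, ∫⁻ y, ENNReal.ofReal (ℓ (fhat x y) (fbd x y)) ∂p₀ ∂Q.fst)
        = ∫⁻ x, ∫⁻ y, ENNReal.ofReal (ℓ (fhat x y) (fpoi x y)) ∂p₀ ∂Q.fst := hIQ
      _ = (ENNReal.ofReal ρ)⁻¹ * (ENNReal.ofReal ρ *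
          ∫⁻ x, ∫⁻ y, ENNReal.ofReal (ℓ (fhat x y) (fpoi x y)) ∂p₀ ∂Q.fst) := by
          rw [← mul_assoc, ENNReal.inv_mul_cancel hd0 hdt, one_mul]
      _ ≤ (ENNReal.ofReal ρ)⁻¹ *
          ∫⁻ x, ∫⁻ y, ENNReal.ofReal (ℓ (fhat x y) (fpoi x y)) ∂p₀ ∂M.fst := by
          rw [hIM]; exact mul_le_mul_right le_add_self _
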